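/- Let A ∈ ℂ^{n×n} be Schur stable and B ∈ ℂ^{n×m}. There exists a positive definite matrix V in the cone 𝒞 = {V ∈ ℍ₊^{n+m} : [A B] V [A B]* = [I 0] V [I 0]*} if and only if the pair (A, B) is controllable. -/

import Mathlib

open Matrix
open scoped ComplexOrder

/-- The cone `𝒞 = {V ⪰ 0 : [A B] V [A B]ᴴ = [I 0] V [I 0]ᴴ}`. -/
def coneC {n m : ℕ} (A : Matrix (Fin n) (Fin n) ℂ) (B : Matrix (Fin n) (Fin m) ℂ) :
    Set (Matrix (Fin n ⊕ Fin m) (Fin n ⊕ Fin m) ℂ) :=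
  {V | V.PosSemidef ∧
    (fromCols A B) * V * (fromCols A B)ᴴ =
      (fromCols (1 : Matrix (Fin n) (Fin n) ℂ) (0 : Matrix (Fin n) (Fin m) ℂ)) * V *
        (fromCols (1 : Matrix (Fin n) (Fin n) ℂ) (0 : Matrix (Fin n) (Fin m) ℂ))ᴴ}

/-- The controllability matrix `[B, AB, …, A^{n-1}B]`. -/
noncomputable def ctrbMatrix {n m : ℕ} (A : Matrix (Fin n) (Fin n) ℂ)
    (B : Matrix (Fin n) (Fin m) ℂ) : Matrix (Fin n) (Fin n × Fin m) ℂ :=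
  Matrix.of fun i kj => ((A ^ (kj.1 : ℕ)) * B) i kj.2

section Aux

attribute [local instance] Matrix.frobeniusSeminormedAddCommGroup Matrix.frobeniusNormedRing
  Matrix.frobeniusNormedSpace Matrix.frobeniusNormedAlgebra

variable {n m : ℕ}

open Filter in
/-- Geometric decay of powers when the spectral radius is `< 1`. -/
lemma aux_pow_bound (A : Matrix (Fin n) (Fin n) ℂ) (hA : spectralRadius ℂ A < 1) :
    ∃ r : NNReal, r < 1 ∧ ∀ᶠ k in atTop, ‖A ^ k‖₊ ≤ r ^ k := by
  haveI : CompleteSpace (Matrix (Fin n) (Fin n) ℂ) := FiniteDimensional.complete ℂ _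
  obtain ⟨c, hc1, hc2⟩ := exists_between hA
  lift c to NNReal using (hc2.trans_le le_top).ne
  refine ⟨c, by exact_mod_cast hc2, ?_⟩
  have T := spectrum.pow_nnnorm_pow_one_div_tendsto_nhds_spectralRadius A
  filter_upwards [T.eventually_lt_const hc1, eventually_ge_atTop 1] with k hk hk1
  have hk0 : (k : ℝ) ≠ 0 := by positivity
  have h1 : (‖A ^ k‖₊ : ENNReal) ≤ (c : ENNReal) ^ k := by
    calc (‖A ^ k‖₊ : ENNReal) = ((‖A ^ k‖₊ : ENNReal) ^ (1 / (k : ℝ))) ^ (k : ℕ) := by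
          rw [← ENNReal.rpow_natCast _ k, ← ENNReal.rpow_mul, one_div,
            inv_mul_cancel₀ hk0, ENNReal.rpow_one]
      _ ≤ (c : ENNReal) ^ (k : ℕ) := pow_le_pow_left' hk.le k
  rw [← ENNReal.coe_pow, ENNReal.coe_le_coe] at h1
  exact h1

lemma aux_summable (A : Matrix (Fin n) (Fin n) ℂ) (B : Matrix (Fin n) (Fin m) ℂ)
    (hA : spectralRadius ℂ A < 1) :
    Summable (fun k : ℕ => (A ^ k * B) * (A ^ k * B)ᴴ) := by
  haveI : CompleteSpace (Matrix (Fin n) (Fin n) ℂ) := FiniteDimensional.complete ℂ _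
  obtain ⟨r, hr, hev⟩ := aux_pow_bound A hA
  have hr' : (r : ℝ) < 1 := hr
  have hr0 : (0:ℝ) ≤ r := r.coe_nonneg
  apply Summable.of_norm_bounded_eventually_nat
    (g := fun k => (‖B‖ * ‖B‖) * (((r:ℝ) * r) ^ k))
  · exact (summable_geometric_of_lt_one (by positivity) (by nlinarith)).mul_left _
  · filter_upwards [hev] with k hk
    have h1 : ‖A ^ k‖ ≤ (r : ℝ) ^ k := by
      have := (NNReal.coe_le_coe).mpr hk
      simpa [coe_nnnorm] using this
    have h2 : ‖A ^ k * B‖ ≤ (r : ℝ) ^ k * ‖B‖ :=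
      le_trans (Matrix.frobenius_norm_mul _ _)
        (mul_le_mul_of_nonneg_right h1 (norm_nonneg B))
    calc ‖(A ^ k * B) * (A ^ k * B)ᴴ‖ ≤ ‖A ^ k * B‖ * ‖(A ^ k * B)ᴴ‖ :=
          Matrix.frobenius_norm_mul _ _
      _ = ‖A ^ k * B‖ * ‖A ^ k * B‖ := by rw [Matrix.frobenius_norm_conjTranspose]
      _ ≤ ((r:ℝ) ^ k * ‖B‖) * ((r:ℝ) ^ k * ‖B‖) :=
          mul_le_mul h2 h2 (norm_nonneg _) (by positivity)
      _ = (‖B‖ * ‖B‖) * (((r:ℝ) * r) ^ k) := by ring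

/-- quadratic form of `C * Cᴴ`. -/
lemma quad_helper0 {p q : Type*} [Fintype p] [Fintype q] (C : Matrix p q ℂ) (x : p → ℂ) :
    star x ⬝ᵥ ((C * Cᴴ) *ᵥ x) = star (Cᴴ *ᵥ x) ⬝ᵥ (Cᴴ *ᵥ x) := by
  rw [← mulVec_mulVec, dotProduct_mulVec, star_mulVec, conjTranspose_conjTranspose]

/-- quadratic form of `C * V * Cᴴ`. -/
lemma quad_helper {p q : Type*} [Fintype p] [Fintype q] (C : Matrix p q ℂ)
    (V : Matrix q q ℂ) (x : p → ℂ) :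
    star x ⬝ᵥ ((C * V * Cᴴ) *ᵥ x) = star (Cᴴ *ᵥ x) ⬝ᵥ (V *ᵥ (Cᴴ *ᵥ x)) := by
  rw [← mulVec_mulVec, ← mulVec_mulVec, dotProduct_mulVec, star_mulVec,
    conjTranspose_conjTranspose]

lemma star_dot_self (q : Type*) [Fintype q] (y : q → ℂ) :
    star y ⬝ᵥ y = ((∑ j, Complex.normSq (y j) : ℝ) : ℂ) := by
  simp only [dotProduct, Pi.star_apply, Complex.ofReal_sum]
  congr 1
  ext j
  rw [Complex.star_def, mul_comm, Complex.mul_conj]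

lemma ctrb_entry (A : Matrix (Fin n) (Fin n) ℂ) (B : Matrix (Fin n) (Fin m) ℂ)
    (x : Fin n → ℂ) (k : Fin n) (j : Fin m) :
    ((ctrbMatrix A B)ᴴ *ᵥ x) (k, j) = ((A ^ (k : ℕ) * B)ᴴ *ᵥ x) j := rfl

/-- The gramian `W = ∑ Aᵏ B Bᴴ (Aᴴ)ᵏ`. -/
noncomputable def gramW (A : Matrix (Fin n) (Fin n) ℂ) (B : Matrix (Fin n) (Fin m) ℂ) :
    Matrix (Fin n) (Fin n) ℂ :=
  ∑' k : ℕ, (A ^ k * B) * (A ^ k * B)ᴴ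

lemma gramW_stein (A : Matrix (Fin n) (Fin n) ℂ) (B : Matrix (Fin n) (Fin m) ℂ)
    (hA : spectralRadius ℂ A < 1) :
    A * gramW A B * Aᴴ + B * Bᴴ = gramW A B := by
  haveI : CompleteSpace (Matrix (Fin n) (Fin n) ℂ) := FiniteDimensional.complete ℂ _
  set g : ℕ → Matrix (Fin n) (Fin n) ℂ := fun k => (A ^ k * B) * (A ^ k * B)ᴴ with hgdef
  have hg : Summable g := aux_summable A B hA
  let L : Matrix (Fin n) (Fin n) ℂ →ₗ[ℂ] Matrix (Fin n) (Fin n) ℂ :=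
    { toFun := fun M => A * M * Aᴴ
      map_add' := fun M N => by simp [Matrix.mul_add, Matrix.add_mul]
      map_smul' := fun c M => by simp [Matrix.mul_smul, Matrix.smul_mul] }
  have hshift : ∀ k, A * g k * Aᴴ = g (k + 1) := by
    intro k
    simp only [hgdef, pow_succ', conjTranspose_mul, conjTranspose_pow, Matrix.mul_assoc]
    rw [← pow_succ, ← pow_succ']
  have hL : A * gramW A B * Aᴴ = ∑' k, g (k + 1) := by
    have h1 := (hg.hasSum.mapL L.toContinuousLinearMap).tsum_eq
    simp only [LinearMap.coe_toContinuousLinearMap', LinearMap.coe_mk, AddHom.coe_mk] at h1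
    calc A * gramW A B * Aᴴ = ∑' k, A * g k * Aᴴ := h1.symm
      _ = ∑' k, g (k + 1) := by simp only [hshift]
  have h0 : g 0 = B * Bᴴ := by simp [hgdef]
  calc A * gramW A B * Aᴴ + B * Bᴴ = (∑' k, g (k + 1)) + g 0 := by rw [hL, h0]
    _ = g 0 + ∑' k, g (k + 1) := add_comm _ _
    _ = gramW A B := (Summable.tsum_eq_zero_add hg).symm

lemma gramW_quad (A : Matrix (Fin n) (Fin n) ℂ) (B : Matrix (Fin n) (Fin m) ℂ)
    (hA : spectralRadius ℂ A < 1) (x : Fin n → ℂ) :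
    ∃ ρ : ℕ → ℝ, Summable ρ ∧ (∀ k, 0 ≤ ρ k) ∧
      (∀ k, ρ k = 0 ↔ (A ^ k * B)ᴴ *ᵥ x = 0) ∧
      star x ⬝ᵥ (gramW A B *ᵥ x) = ((∑' k, ρ k : ℝ) : ℂ) := by
  haveI : CompleteSpace (Matrix (Fin n) (Fin n) ℂ) := FiniteDimensional.complete ℂ _
  set g : ℕ → Matrix (Fin n) (Fin n) ℂ := fun k => (A ^ k * B) * (A ^ k * B)ᴴ with hgdef
  have hg : Summable g := aux_summable A B hA
  set y : ℕ → Fin m → ℂ := fun k => (A ^ k * B)ᴴ *ᵥ x with hydef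
  set ρ : ℕ → ℝ := fun k => ∑ j, Complex.normSq (y k j) with hρdef
  let ℓ : Matrix (Fin n) (Fin n) ℂ →ₗ[ℂ] ℂ :=
    { toFun := fun M => star x ⬝ᵥ (M *ᵥ x)
      map_add' := fun M N => by simp [Matrix.add_mulVec]
      map_smul' := fun c M => by simp [Matrix.smul_mulVec] }
  have hterm : ∀ k, ℓ (g k) = ((ρ k : ℝ) : ℂ) := by
    intro k
    show star x ⬝ᵥ (g k *ᵥ x) = _
    rw [hgdef, quad_helper0, star_dot_self]
  have hq : Summable fun k => ℓ (g k) :=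
    (hg.hasSum.mapL ℓ.toContinuousLinearMap).summable
  have hρs : Summable ρ := by
    have h2 : Summable fun k => (Complex.reCLM : ℂ →L[ℝ] ℝ) (ℓ (g k)) := hq.mapL _
    have h3 : (fun k => (Complex.reCLM : ℂ →L[ℝ] ℝ) (ℓ (g k))) = ρ := by
      funext k; rw [hterm k]; simp
    rwa [h3] at h2
  refine ⟨ρ, hρs, fun k => Finset.sum_nonneg fun j _ => Complex.normSq_nonneg _, ?_, ?_⟩
  · intro k
    constructor
    · intro h
      have := (Finset.sum_eq_zero_iff_of_nonneg
        (fun j _ => Complex.normSq_nonneg (y k j))).mp h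
      funext j
      exact Complex.normSq_eq_zero.mp (this j (Finset.mem_univ j))
    · intro h
      have hy : y k = 0 := h
      simp [hρdef, hy]
  · have h1 := (hg.hasSum.mapL ℓ.toContinuousLinearMap).tsum_eq
    have h2 : star x ⬝ᵥ (gramW A B *ᵥ x) = ∑' k, ℓ (g k) := h1.symm
    rw [h2]
    have h3 : ∀ k, ℓ (g k) = (Complex.ofRealCLM : ℝ →L[ℝ] ℂ) (ρ k) := fun k => hterm k
    calc (∑' k, ℓ (g k)) = ∑' k, (Complex.ofRealCLM : ℝ →L[ℝ] ℂ) (ρ k) := by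
          simp only [h3]
      _ = ((∑' k, ρ k : ℝ) : ℂ) := (hρs.hasSum.mapL _).tsum_eq

lemma gramW_posSemidef (A : Matrix (Fin n) (Fin n) ℂ) (B : Matrix (Fin n) (Fin m) ℂ)
    (hA : spectralRadius ℂ A < 1) : (gramW A B).PosSemidef := by
  haveI : CompleteSpace (Matrix (Fin n) (Fin n) ℂ) := FiniteDimensional.complete ℂ _
  have hg : Summable (fun k : ℕ => (A ^ k * B) * (A ^ k * B)ᴴ) := aux_summable A B hA
  rw [Matrix.posSemidef_iff_dotProduct_mulVec]; constructor
  · show (gramW A B)ᴴ = gramW A B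
    rw [← Matrix.star_eq_conjTranspose, gramW, tsum_star]
    congr 1
    funext k
    rw [Matrix.star_eq_conjTranspose, conjTranspose_mul, conjTranspose_conjTranspose]
  · intro x
    obtain ⟨ρ, hρs, hρnn, _, hval⟩ := gramW_quad A B hA x
    rw [hval]
    exact_mod_cast Complex.zero_le_real.mpr (tsum_nonneg hρnn)

lemma gramW_posDef (A : Matrix (Fin n) (Fin n) ℂ) (B : Matrix (Fin n) (Fin m) ℂ)
    (hA : spectralRadius ℂ A < 1) (hrank : (ctrbMatrix A B).rank = n) :
    (gramW A B).PosDef := by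
  haveI : CompleteSpace (Matrix (Fin n) (Fin n) ℂ) := FiniteDimensional.complete ℂ _
  refine Matrix.PosDef.of_dotProduct_mulVec_pos (gramW_posSemidef A B hA).1 fun x hx => ?_
  obtain ⟨ρ, hρs, hρnn, hρ0, hval⟩ := gramW_quad A B hA x
  rw [hval]
  -- it suffices to find `k` with `ρ k > 0`
  have hker : ∀ z, (ctrbMatrix A B)ᴴ.mulVecLin z = 0 → z = 0 := by
    have h1 : (ctrbMatrix A B)ᴴ.rank = n := by
      rw [Matrix.rank_conjTranspose]; exact hrank
    have h2 := LinearMap.finrank_range_add_finrank_ker ((ctrbMatrix A B)ᴴ).mulVecLin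
    rw [Module.finrank_fin_fun (R := ℂ)] at h2
    have h3 : (ctrbMatrix A B)ᴴ.rank = Module.finrank ℂ
        (LinearMap.range ((ctrbMatrix A B)ᴴ).mulVecLin) := rfl
    have h4 : Module.finrank ℂ (LinearMap.ker ((ctrbMatrix A B)ᴴ).mulVecLin) = 0 := by omega
    have h5 : LinearMap.ker ((ctrbMatrix A B)ᴴ).mulVecLin = ⊥ :=
      Submodule.finrank_eq_zero.mp h4
    intro z hz
    have : z ∈ LinearMap.ker ((ctrbMatrix A B)ᴴ).mulVecLin := hz
    rw [h5] at this
    exact this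
  have hex : ∃ k : ℕ, ¬ ((A ^ k * B)ᴴ *ᵥ x = 0) := by
    by_contra hcon
    push_neg at hcon
    apply hx
    apply hker
    rw [Matrix.mulVecLin_apply]
    funext kj
    obtain ⟨k, j⟩ := kj
    rw [ctrb_entry]
    rw [hcon (k : ℕ)]
    rfl
  obtain ⟨k, hk⟩ := hex
  have hρk : 0 < ρ k := lt_of_le_of_ne (hρnn k) (fun h => hk (( hρ0 k).mp h.symm))
  have : 0 < ∑' j, ρ j := lt_of_lt_of_le hρk (Summable.le_tsum hρs k fun j _ => hρnn j)
  exact_mod_cast Complex.zero_lt_real.mpr this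

end Aux

section SpanPow

/-- every power of `A` lies in the span of `A^0, …, A^{n-1}` (Cayley–Hamilton). -/
lemma pow_mem_span {n : ℕ} (hn : 0 < n) (A : Matrix (Fin n) (Fin n) ℂ) (k : ℕ) :
    A ^ k ∈ Submodule.span ℂ (Set.range fun i : Fin n => A ^ (i : ℕ)) := by
  set S := Submodule.span ℂ (Set.range fun i : Fin n => A ^ (i : ℕ)) with hS
  have hmem : ∀ i : ℕ, i < n → A ^ i ∈ S := fun i hi =>
    Submodule.subset_span ⟨⟨i, hi⟩, rfl⟩
  have hnmem : A ^ n ∈ S := by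
    have hCH := Matrix.aeval_self_charpoly A
    have hdeg : A.charpoly.natDegree = n := by
      rw [Matrix.charpoly_natDegree_eq_dim, Fintype.card_fin]
    have hmon := A.charpoly_monic
    rw [Polynomial.aeval_eq_sum_range, hdeg, Finset.sum_range_succ] at hCH
    have hc : A.charpoly.coeff n = 1 := by
      have := hmon.coeff_natDegree
      rwa [hdeg] at this
    rw [hc, one_smul] at hCH
    have hAn : A ^ n = -∑ i ∈ Finset.range n, A.charpoly.coeff i • A ^ i := by
      rw [eq_neg_iff_add_eq_zero, add_comm]
      exact hCH
    rw [hAn]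
    exact Submodule.neg_mem _ (Submodule.sum_mem _ fun i hi =>
      Submodule.smul_mem _ _ (hmem i (Finset.mem_range.mp hi)))
  induction k with
  | zero => exact hmem 0 hn
  | succ k ih =>
    have hstep : ∀ X ∈ S, X * A ∈ S := by
      intro X hX
      have h1 : S.map (LinearMap.mulRight ℂ A) ≤ S := by
        rw [hS, Submodule.map_span, Submodule.span_le]
        rintro _ ⟨_, ⟨i, rfl⟩, rfl⟩
        simp only [LinearMap.mulRight_apply, SetLike.mem_coe]
        rw [← pow_succ]
        rcases lt_or_eq_of_le (Nat.succ_le_of_lt i.2) with h | h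
        · exact hmem _ h
        · have h' : (↑i + 1 : ℕ) = n := h
          rw [h']; exact hnmem
      exact h1 ⟨X, hX, rfl⟩
    rw [pow_succ]
    exact hstep _ ih

end SpanPow

section EigBound

variable {n : ℕ}

lemma aux_eig_lt_one (A : Matrix (Fin n) (Fin n) ℂ) (hA : spectralRadius ℂ A < 1)
    {μ : ℂ} {u : Fin n → ℂ} (hu : u ≠ 0) (h : Aᴴ *ᵥ u = μ • u) :
    Complex.normSq μ < 1 := by
  have h1 : ¬ IsUnit ((algebraMap ℂ (Matrix (Fin n) (Fin n) ℂ)) μ - Aᴴ) := by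
    intro h'
    apply hu
    have hz : ((algebraMap ℂ (Matrix (Fin n) (Fin n) ℂ)) μ - Aᴴ) *ᵥ u = 0 := by
      rw [Algebra.algebraMap_eq_smul_one, Matrix.sub_mulVec, Matrix.smul_mulVec,
        Matrix.one_mulVec, h, sub_self]
    have h2 : ((↑h'.unit⁻¹ : Matrix (Fin n) (Fin n) ℂ) *
        ((algebraMap ℂ (Matrix (Fin n) (Fin n) ℂ)) μ - Aᴴ)) = 1 := by
      have := h'.unit.inv_mul
      rwa [h'.unit_spec] at this
    calc u = 1 *ᵥ u := (Matrix.one_mulVec u).symm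
      _ = ((↑h'.unit⁻¹ : Matrix (Fin n) (Fin n) ℂ) *
            ((algebraMap ℂ (Matrix (Fin n) (Fin n) ℂ)) μ - Aᴴ)) *ᵥ u := by rw [h2]
      _ = (↑h'.unit⁻¹ : Matrix (Fin n) (Fin n) ℂ) *ᵥ
            (((algebraMap ℂ (Matrix (Fin n) (Fin n) ℂ)) μ - Aᴴ) *ᵥ u) :=
          (Matrix.mulVec_mulVec _ _ _).symm
      _ = 0 := by rw [hz, Matrix.mulVec_zero]
  have h3 : (starRingEnd ℂ) μ ∈ spectrum ℂ A := by
    rw [spectrum.mem_iff]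
    intro h'
    apply h1
    have hstar := h'.star
    have heq : star ((algebraMap ℂ (Matrix (Fin n) (Fin n) ℂ)) ((starRingEnd ℂ) μ) - A)
        = (algebraMap ℂ (Matrix (Fin n) (Fin n) ℂ)) μ - Aᴴ := by
      simp [Algebra.algebraMap_eq_smul_one, star_sub, star_smul,
        Matrix.star_eq_conjTranspose]
    rwa [heq] at hstar
  have h4 : (‖(starRingEnd ℂ) μ‖₊ : ENNReal) ≤ spectralRadius ℂ A := by
    rw [spectralRadius]
    exact le_iSup₂ (f := fun k (_ : k ∈ spectrum ℂ A) => (‖k‖₊ : ENNReal)) _ h3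
  have h5 : (‖μ‖₊ : ENNReal) < 1 := by
    have : ‖(starRingEnd ℂ) μ‖₊ = ‖μ‖₊ := by simp
    rw [← this]
    exact lt_of_le_of_lt h4 hA
  have h6 : ‖μ‖ < 1 := by
    exact_mod_cast ENNReal.coe_lt_one_iff.mp h5
  calc Complex.normSq μ = ‖μ‖ ^ 2 := by rw [← Complex.sq_norm]
    _ < 1 := pow_lt_one₀ (norm_nonneg _) h6 two_ne_zero

end EigBound

/-- the cone `𝒞` contains a positive definite matrix iff `(A, B)` is
controllable. -/
theorem cone_posDef_iff_controllable {n m : ℕ}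
    (A : Matrix (Fin n) (Fin n) ℂ) (B : Matrix (Fin n) (Fin m) ℂ)
    (hA : spectralRadius ℂ A < 1) :
    (∃ V, V ∈ coneC A B ∧ V.PosDef) ↔ (ctrbMatrix A B).rank = n := by
  constructor
  · -- PD element of the cone implies controllability
    rintro ⟨V, ⟨hVpsd, hVeq⟩, hVpd⟩
    by_contra hne
    have hle : (ctrbMatrix A B).rank ≤ n := (ctrbMatrix A B).rank_le_card_height.trans
      (by simp)
    have hlt : (ctrbMatrix A B).rank < n := lt_of_le_of_ne hle hne
    have hn : 0 < n := lt_of_le_of_lt (Nat.zero_le _) hlt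
    -- find a nonzero x in the kernel of ctrbᴴ
    have hkerne : LinearMap.ker ((ctrbMatrix A B)ᴴ).mulVecLin ≠ ⊥ := by
      intro hbot
      have h2 := LinearMap.finrank_range_add_finrank_ker ((ctrbMatrix A B)ᴴ).mulVecLin
      rw [Module.finrank_fin_fun (R := ℂ), hbot, finrank_bot] at h2
      have h3 : (ctrbMatrix A B)ᴴ.rank = Module.finrank ℂ
          (LinearMap.range ((ctrbMatrix A B)ᴴ).mulVecLin) := rfl
      rw [Matrix.rank_conjTranspose] at h3
      omega
    obtain ⟨x, hxker, hx0⟩ := Submodule.exists_mem_ne_zero_of_ne_bot hkerne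
    have hxk : ∀ i : Fin n, (A ^ (i : ℕ) * B)ᴴ *ᵥ x = 0 := by
      intro i
      funext j
      have := congrFun (LinearMap.mem_ker.mp hxker) (i, j)
      rw [Matrix.mulVecLin_apply] at this
      rw [← ctrb_entry A B x i j]
      exact this
    -- extend to all powers via Cayley–Hamilton
    have hall : ∀ k : ℕ, (A ^ k * B)ᴴ *ᵥ x = 0 := by
      let Ψ : Matrix (Fin n) (Fin n) ℂ →ₗ[ℂ] (Fin m → ℂ) :=
        { toFun := fun M => star x ᵥ* (M * B)
          map_add' := fun M N => by simp [Matrix.add_mul, Matrix.vecMul_add]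
          map_smul' := fun c M => by
            funext j
            simp only [Matrix.smul_mul, RingHom.id_apply, Pi.smul_apply, smul_eq_mul,
              Matrix.vecMul, dotProduct, Matrix.smul_apply]
            rw [Finset.mul_sum]
            exact Finset.sum_congr rfl fun i _ => by ring }
      have hΨ : ∀ M, Ψ M = star x ᵥ* (M * B) := fun _ => rfl
      have hconv : ∀ (k : ℕ), star x ᵥ* (A ^ k * B) = star ((A ^ k * B)ᴴ *ᵥ x) := by
        intro k
        rw [star_mulVec, conjTranspose_conjTranspose]
      have hΨ0 : ∀ i : Fin n, Ψ (A ^ (i : ℕ)) = 0 := by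
        intro i
        rw [hΨ, hconv, hxk i]
        simp
      have hspan : Submodule.span ℂ (Set.range fun i : Fin n => A ^ (i : ℕ)) ≤
          LinearMap.ker Ψ := by
        rw [Submodule.span_le]
        rintro _ ⟨i, rfl⟩
        exact hΨ0 i
      intro k
      have hk : Ψ (A ^ k) = 0 := hspan (pow_mem_span hn A k)
      rw [hΨ, hconv] at hk
      have := congrArg star hk
      rwa [star_star, star_zero] at this
    -- the invariant subspace
    set N : Submodule ℂ (Fin n → ℂ) :=
      ⨅ k : ℕ, LinearMap.ker ((A ^ k * B)ᴴ).mulVecLin with hN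
    have hxN : x ∈ N := by
      rw [hN, Submodule.mem_iInf]
      intro k
      rw [LinearMap.mem_ker, Matrix.mulVecLin_apply]
      exact hall k
    have hNne : N ≠ ⊥ := fun hbot => hx0 (by rw [hbot] at hxN; exact hxN)
    have hInv : ∀ v ∈ N, (Aᴴ).mulVecLin v ∈ N := by
      intro v hv
      rw [hN, Submodule.mem_iInf] at hv ⊢
      intro k
      have hk1 := hv (k + 1)
      rw [LinearMap.mem_ker, Matrix.mulVecLin_apply] at hk1 ⊢
      rw [Matrix.mulVecLin_apply, Matrix.mulVec_mulVec]
      have hmm : (A ^ k * B)ᴴ * Aᴴ = (A ^ (k + 1) * B)ᴴ := by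
        rw [← conjTranspose_mul, ← Matrix.mul_assoc, ← pow_succ']
      rw [hmm]
      exact hk1
    haveI : Nontrivial N := Submodule.nontrivial_iff_ne_bot.mpr hNne
    obtain ⟨μ, hμ⟩ := Module.End.exists_eigenvalue ((Aᴴ).mulVecLin.restrict hInv)
    obtain ⟨v, hv⟩ := hμ.exists_hasEigenvector
    have hu0 : (v : Fin n → ℂ) ≠ 0 := fun hc => hv.right (Subtype.ext hc)
    set u : Fin n → ℂ := (v : Fin n → ℂ) with hu
    have hAu : Aᴴ *ᵥ u = μ • u := by
      have h2 := congrArg (Subtype.val) hv.apply_eq_smul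
      rw [LinearMap.restrict_coe_apply] at h2
      simpa [Matrix.mulVecLin_apply] using h2
    have hBu : Bᴴ *ᵥ u = 0 := by
      have hvN : (v : Fin n → ℂ) ∈ N := v.2
      have h0 := (Submodule.mem_iInf
        (fun k : ℕ => LinearMap.ker ((A ^ k * B)ᴴ).mulVecLin)).mp hvN 0
      rw [LinearMap.mem_ker, Matrix.mulVecLin_apply, pow_zero, Matrix.one_mul] at h0
      exact h0
    -- quadratic form contradiction
    set w : Fin n ⊕ Fin m → ℂ := Sum.elim u 0 with hw
    have hw0 : w ≠ 0 := by
      intro hc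
      apply hu0
      funext i
      have := congrFun hc (Sum.inl i)
      exact this
    have hCu : (fromCols A B)ᴴ *ᵥ u = μ • w := by
      rw [conjTranspose_fromCols_eq_fromRows_conjTranspose, fromRows_mulVec, hAu, hBu]
      funext i
      rcases i with i | i <;> simp [hw]
    have hC0u : (fromCols (1 : Matrix (Fin n) (Fin n) ℂ)
        (0 : Matrix (Fin n) (Fin m) ℂ))ᴴ *ᵥ u = w := by
      rw [conjTranspose_fromCols_eq_fromRows_conjTranspose, fromRows_mulVec,
        conjTranspose_one, conjTranspose_zero, Matrix.one_mulVec, Matrix.zero_mulVec]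
    have hq := congrArg (fun M => star u ⬝ᵥ (M *ᵥ u)) hVeq
    rw [quad_helper, quad_helper, hCu, hC0u] at hq
    have h' : star (μ • w) ⬝ᵥ (V *ᵥ (μ • w)) = (star μ * μ) * (star w ⬝ᵥ (V *ᵥ w)) := by
      rw [star_smul, Matrix.mulVec_smul, smul_dotProduct, dotProduct_smul, smul_smul,
        smul_eq_mul]
    have hq2 : (star μ * μ) * (star w ⬝ᵥ (V *ᵥ w)) = star w ⬝ᵥ (V *ᵥ w) := by
      rw [← h']; exact hq
    have hne1 : (star μ * μ : ℂ) ≠ 1 := by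
      rw [Complex.star_def, mul_comm, Complex.mul_conj]
      intro hc
      have hlt1 := aux_eig_lt_one A hA hu0 hAu
      have heq1 : Complex.normSq μ = 1 := by simpa using congrArg Complex.re hc
      exact absurd heq1 (ne_of_lt hlt1)
    have hzero : star w ⬝ᵥ (V *ᵥ w) = 0 := by
      by_contra hnz
      exact hne1 (mul_right_cancel₀ hnz (by rw [one_mul]; exact hq2))
    exact absurd hzero (ne_of_gt (hVpd.dotProduct_mulVec_pos hw0))
  · -- controllability implies a PD element of the cone
    intro hrank
    set W := gramW A B with hW
    refine ⟨fromBlocks W 0 0 (1 : Matrix (Fin m) (Fin m) ℂ), ⟨?_, ?_⟩, ?_⟩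
    · -- positive semidefinite
      rw [Matrix.posSemidef_iff_dotProduct_mulVec]; constructor
      · have hWh : W.IsHermitian := (gramW_posSemidef A B hA).1
        rw [Matrix.isHermitian_fromBlocks_iff]
        exact ⟨hWh, by simp, by simp, isHermitian_one⟩
      · intro x
        rw [fromBlocks_mulVec, dotProduct_block]
        simp only [Matrix.zero_mulVec, add_zero, zero_add, Matrix.one_mulVec, Pi.star_apply]
        have h1 : 0 ≤ star (x ∘ Sum.inl) ⬝ᵥ (W *ᵥ (x ∘ Sum.inl)) :=
          (gramW_posSemidef A B hA).dotProduct_mulVec_nonneg _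
        have h2 : (0:ℂ) ≤ star (x ∘ Sum.inr) ⬝ᵥ (x ∘ Sum.inr) :=
          dotProduct_star_self_nonneg _
        exact add_nonneg h1 h2
    · -- cone equation
      rw [conjTranspose_fromCols_eq_fromRows_conjTranspose,
        conjTranspose_fromCols_eq_fromRows_conjTranspose,
        fromCols_mul_fromBlocks, fromCols_mul_fromBlocks,
        fromCols_mul_fromRows, fromCols_mul_fromRows]
      simp only [Matrix.mul_zero, Matrix.mul_one, Matrix.zero_mul, Matrix.one_mul,
        add_zero, zero_add, conjTranspose_zero, conjTranspose_one]
      exact gramW_stein A B hA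
    · -- positive definite
      rw [Matrix.posDef_iff_dotProduct_mulVec]; constructor
      · have hWh : W.IsHermitian := (gramW_posSemidef A B hA).1
        rw [Matrix.isHermitian_fromBlocks_iff]
        exact ⟨hWh, by simp, by simp, isHermitian_one⟩
      · intro x hx
        rw [fromBlocks_mulVec, dotProduct_block]
        simp only [Matrix.zero_mulVec, add_zero, zero_add, Matrix.one_mulVec]
        have hcase : x ∘ Sum.inl ≠ 0 ∨ x ∘ Sum.inr ≠ 0 := by
          by_contra hc
          push_neg at hc
          apply hx
          funext i
          rcases i with i | i
          · exact congrFun hc.1 i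
          · exact congrFun hc.2 i
        rcases hcase with h | h
        · have h1 : 0 < star (x ∘ Sum.inl) ⬝ᵥ (W *ᵥ (x ∘ Sum.inl)) :=
            (gramW_posDef A B hA hrank).dotProduct_mulVec_pos h
          have h2 : (0:ℂ) ≤ star (x ∘ Sum.inr) ⬝ᵥ (x ∘ Sum.inr) :=
            dotProduct_star_self_nonneg _
          calc (0:ℂ) < star (x ∘ Sum.inl) ⬝ᵥ (W *ᵥ (x ∘ Sum.inl)) := h1
            _ ≤ _ := le_add_of_nonneg_right h2
        · have h1 : 0 ≤ star (x ∘ Sum.inl) ⬝ᵥ (W *ᵥ (x ∘ Sum.inl)) :=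
            (gramW_posSemidef A B hA).dotProduct_mulVec_nonneg _
          have h2 : (0:ℂ) < star (x ∘ Sum.inr) ⬝ᵥ (x ∘ Sum.inr) :=
            dotProduct_star_self_pos_iff.mpr h
          calc (0:ℂ) < star (x ∘ Sum.inr) ⬝ᵥ (x ∘ Sum.inr) := h2
            _ ≤ _ := le_add_of_nonneg_left h1
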